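/- Let p, q : ℝ → ℝ be functions with p differentiable and satisfying p'(x) = −2q(x) − p(x)² for all x ∈ ℝ, and set u(x) := p'(x). Define the 2×2 complex matrices B̃(z;x) := [[p(x), i z + 2 i q(x)], [−i, −p(x)]], R(x) := e^{iπσ₃/4} · [[1, −i p(x)], [0, 1]], and B(z;x) := [[0, −z + 2u(x)], [−1, 0]]. Then for every x ∈ ℝ and every z ∈ ℂ, R(x) B̃(z;x) R(x)^{-1} + R'(x) R(x)^{-1} = B(z;x), where R'(x) is the entrywise derivative of R. -/
import Mathlib


open Matrix

/-- `R(x) = e^{iπσ₃/4}·[[1, −i p(x)],[0, 1]]`, where `e^{iπσ₃/4} = diag(e^{iπ/4}, e^{−iπ/4})`. -/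
noncomputable def Rmat (p : ℝ → ℝ) (x : ℝ) : Matrix (Fin 2) (Fin 2) ℂ :=
  !![Complex.exp (Real.pi * Complex.I / 4), 0; 0, Complex.exp (-(Real.pi * Complex.I / 4))] *
    !![1, -Complex.I * (p x : ℂ); 0, 1]

noncomputable abbrev expA : ℂ := Complex.exp (Real.pi * Complex.I / 4)

lemma expA_sq : expA * expA = Complex.I := by
  rw [← Complex.exp_add]
  have h : Real.pi * Complex.I / 4 + Real.pi * Complex.I / 4
      = ((Real.pi / 2 : ℝ) : ℂ) * Complex.I := by push_cast; ring
  rw [h, Complex.exp_mul_I, ← Complex.ofReal_cos, ← Complex.ofReal_sin,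
    Real.cos_pi_div_two, Real.sin_pi_div_two]
  simp

lemma expB_eq : Complex.exp (-(Real.pi * Complex.I / 4)) = -Complex.I * expA := by
  have hne : expA ≠ 0 := Complex.exp_ne_zero _
  apply mul_left_cancel₀ hne
  rw [← Complex.exp_add]
  have h : Real.pi * Complex.I / 4 + -(Real.pi * Complex.I / 4) = 0 := by ring
  rw [h, Complex.exp_zero]
  calc (1 : ℂ) = -Complex.I * Complex.I := by simp
    _ = -Complex.I * (expA * expA) := by rw [expA_sq]
    _ = expA * (-Complex.I * expA) := by ring

lemma Rmat_eq (p : ℝ → ℝ) (y : ℝ) :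
    Rmat p y = !![expA, -Complex.I * (p y : ℂ) * expA; 0, -Complex.I * expA] := by
  rw [Rmat, expB_eq]
  ext i j
  fin_cases i <;> fin_cases j <;>
    simp [Matrix.mul_apply, Fin.sum_univ_two] <;> ring

lemma Rmat_mul_inv (p : ℝ → ℝ) (x : ℝ) :
    Rmat p x * !![-Complex.I * expA, Complex.I * (p x : ℂ) * expA; 0, expA] = 1 := by
  rw [Rmat_eq]
  ext i j
  fin_cases i <;> fin_cases j <;>
    simp [Matrix.mul_apply, Fin.sum_univ_two, Matrix.one_apply]
  · linear_combination (-Complex.I) * expA_sq - Complex.I_mul_I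
  · ring
  · linear_combination (-Complex.I) * expA_sq - Complex.I_mul_I

lemma Rmat_inv (p : ℝ → ℝ) (x : ℝ) :
    (Rmat p x)⁻¹ = !![-Complex.I * expA, Complex.I * (p x : ℂ) * expA; 0, expA] :=
  Matrix.inv_eq_right_inv (Rmat_mul_inv p x)

lemma Rmat_deriv (p : ℝ → ℝ) (hp : Differentiable ℝ p) (x : ℝ) :
    (Matrix.of fun i j => deriv (fun y => Rmat p y i j) x)
      = !![0, -Complex.I * ((deriv p x : ℝ) : ℂ) * expA; 0, 0] := by
  have hder : HasDerivAt (fun y : ℝ => -Complex.I * ((p y : ℝ) : ℂ) * expA)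
      (-Complex.I * ((deriv p x : ℝ) : ℂ) * expA) x := by
    have h1 : HasDerivAt (fun y : ℝ => ((p y : ℝ) : ℂ)) ((deriv p x : ℝ) : ℂ) x :=
      ((hp x).hasDerivAt).ofReal_comp
    exact (h1.const_mul (-Complex.I)).mul_const expA
  ext i j
  fin_cases i <;> fin_cases j <;>
    simp only [Matrix.of_apply, Rmat_eq, Matrix.cons_val', Matrix.cons_val_zero,
      Matrix.cons_val_one, Matrix.head_cons, Matrix.empty_val', Matrix.cons_val_fin_one,
      Matrix.head_fin_const]
  · simp
  · exact hder.deriv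
  · simp
  · simp

theorem stmt_4 (p q : ℝ → ℝ) (hp : Differentiable ℝ p)
    (hpq : ∀ x : ℝ, deriv p x = -2 * q x - (p x) ^ 2) :
    ∀ (x : ℝ) (z : ℂ),
      Rmat p x * !![(p x : ℂ), Complex.I * z + 2 * Complex.I * (q x : ℂ);
                    -Complex.I, -(p x : ℂ)] * (Rmat p x)⁻¹
        + (Matrix.of fun i j => deriv (fun y => Rmat p y i j) x) * (Rmat p x)⁻¹
        = !![0, -z + 2 * ((deriv p x : ℝ) : ℂ); -1, 0] := by
  intro x z
  have hmain : Rmat p x * !![(p x : ℂ), Complex.I * z + 2 * Complex.I * (q x : ℂ);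
        -Complex.I, -(p x : ℂ)]
      + (Matrix.of fun i j => deriv (fun y => Rmat p y i j) x)
      = !![0, -z + 2 * ((deriv p x : ℝ) : ℂ); -1, 0] * Rmat p x := by
    rw [Rmat_deriv p hp x, Rmat_eq]
    ext i j
    fin_cases i <;> fin_cases j <;>
      simp [Matrix.mul_apply, Fin.sum_univ_two, hpq x] <;> push_cast <;>
      try ring
    · linear_combination (p x : ℂ) * expA * Complex.I_mul_I
    · linear_combination expA * Complex.I_mul_I
  calc Rmat p x * !![(p x : ℂ), Complex.I * z + 2 * Complex.I * (q x : ℂ);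
          -Complex.I, -(p x : ℂ)] * (Rmat p x)⁻¹
        + (Matrix.of fun i j => deriv (fun y => Rmat p y i j) x) * (Rmat p x)⁻¹
      = (Rmat p x * !![(p x : ℂ), Complex.I * z + 2 * Complex.I * (q x : ℂ);
          -Complex.I, -(p x : ℂ)]
        + (Matrix.of fun i j => deriv (fun y => Rmat p y i j) x)) * (Rmat p x)⁻¹ := by
        rw [add_mul]
    _ = !![0, -z + 2 * ((deriv p x : ℝ) : ℂ); -1, 0] * Rmat p x * (Rmat p x)⁻¹ := by
        rw [hmain]
    _ = !![0, -z + 2 * ((deriv p x : ℝ) : ℂ); -1, 0] := by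
        rw [mul_assoc, Rmat_inv, Rmat_mul_inv, mul_one]
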